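/- arXiv:1712.04369 — 5 statements merged into one kernel-verified Lean document; each statement's English description precedes it below -/
import Mathlib

section
/- Let V be a complex vector space of dimension c, and consider data X = (B₀,…,B_{n-1},v₁,…,v_c) with B_i ∈ End(V) pairwise commuting nilpotent endomorphisms and v_j ∈ V, with X stable. Then the space of all such stable data is path connected: any stable datum X can be joined by a continuous path within the space of stable data (with all B_i nilpotent and pairwise commuting) to the datum (0,…,0,e₁,…,e_c), where e₁,…,e_c is a fixed basis of V, possibly after acting by an element of GL(V). -/
open Matrix Polynomial Module Set


variable {c n : ℕ}

noncomputable def stmt5aux_mvR (c : ℕ) (x : Fin c → ℂ) :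
    Matrix (Fin c) (Fin c) ℂ →ₗ[ℂ] (Fin c → ℂ) where
  toFun m := m.mulVec x
  map_add' a b := Matrix.add_mulVec a b x
  map_smul' r a := Matrix.smul_mulVec r a x

lemma stmt5aux_adjoin_mulVec_mem (B : Fin n → Matrix (Fin c) (Fin c) ℂ)
    (S : Submodule ℂ (Fin c → ℂ)) (hS : ∀ i, ∀ x ∈ S, (B i).mulVec x ∈ S)
    {a : Matrix (Fin c) (Fin c) ℂ} (ha : a ∈ Algebra.adjoin ℂ (Set.range B)) :
    ∀ x ∈ S, a.mulVec x ∈ S := by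
  induction ha using Algebra.adjoin_induction with
  | mem b hb => obtain ⟨i, rfl⟩ := hb; exact hS i
  | algebraMap r =>
      intro x hx
      have : (algebraMap ℂ (Matrix (Fin c) (Fin c) ℂ) r).mulVec x = r • x := by
        rw [Algebra.algebraMap_eq_smul_one, Matrix.smul_mulVec, Matrix.one_mulVec]
      rw [this]; exact S.smul_mem r hx
  | add a b ha hb iha ihb =>
      intro x hx; rw [Matrix.add_mulVec]; exact S.add_mem (iha x hx) (ihb x hx)
  | mul a b ha hb iha ihb =>
      intro x hx; rw [← Matrix.mulVec_mulVec]; exact iha _ (ihb x hx)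

lemma stmt5aux_stable_iff (B : Fin n → Matrix (Fin c) (Fin c) ℂ) (u : Fin c → Fin c → ℂ)
    {m : ℕ} (b : Basis (Fin m) ℂ ↥(Algebra.adjoin ℂ (Set.range B))) :
    (∀ S : Submodule ℂ (Fin c → ℂ),
        (∀ i, ∀ x ∈ S, (B i).mulVec x ∈ S) → (∀ j, u j ∈ S) → S = ⊤) ↔
    Submodule.span ℂ (Set.range fun p : Fin m × Fin c =>
        ((b p.1 : Matrix (Fin c) (Fin c) ℂ)).mulVec (u p.2)) = ⊤ := by
  have claim : ∀ a ∈ Algebra.adjoin ℂ (Set.range B), ∀ j,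
      a.mulVec (u j) ∈ Submodule.span ℂ (Set.range fun p : Fin m × Fin c =>
        ((b p.1 : Matrix (Fin c) (Fin c) ℂ)).mulVec (u p.2)) := by
    intro a ha j
    have ha2 : a = ∑ k, b.repr ⟨a, ha⟩ k • ((b k : Matrix (Fin c) (Fin c) ℂ)) := by
      conv_lhs => rw [show a = ((⟨a, ha⟩ : Algebra.adjoin ℂ (Set.range B)) : Matrix (Fin c) (Fin c) ℂ) from rfl,
        ← b.sum_repr ⟨a, ha⟩]
      push_cast
      rfl
    have : a.mulVec (u j) = stmt5aux_mvR c (u j) a := rfl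
    rw [this, ha2, map_sum]
    refine Submodule.sum_mem _ fun k _ => ?_
    rw [LinearMap.map_smul]
    exact Submodule.smul_mem _ _ (Submodule.subset_span ⟨(k, j), rfl⟩)
  constructor
  · intro hstab
    refine hstab _ ?_ ?_
    · intro i x hx
      induction hx using Submodule.span_induction with
      | mem x hx =>
          obtain ⟨⟨k, j⟩, rfl⟩ := hx
          rw [Matrix.mulVec_mulVec]
          exact claim _ (mul_mem (Algebra.subset_adjoin ⟨i, rfl⟩) (b k).2) j
      | zero => rw [Matrix.mulVec_zero]; exact Submodule.zero_mem _
      | add x y hx hy ihx ihy => rw [Matrix.mulVec_add]; exact Submodule.add_mem _ ihx ihy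
      | smul r x hx ihx => rw [Matrix.mulVec_smul]; exact Submodule.smul_mem _ r ihx
    · intro j
      have : u j = (1 : Matrix (Fin c) (Fin c) ℂ).mulVec (u j) := (Matrix.one_mulVec _).symm
      rw [this]
      exact claim 1 (one_mem _) j
  · intro hspan S hinv hu
    rw [eq_top_iff, ← hspan]
    refine Submodule.span_le.2 ?_
    rintro _ ⟨⟨k, j⟩, rfl⟩
    exact stmt5aux_adjoin_mulVec_mem B S hinv (b k).2 (u j) (hu j)

lemma stmt5aux_generic_span {ι : Type} [Fintype ι] (x y : ι → Fin c → ℂ)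
    (hx : Submodule.span ℂ (Set.range x) = ⊤) :
    ∃ Z : Set ℂ, Z.Finite ∧ (0 : ℂ) ∉ Z ∧
      ∀ z ∉ Z, Submodule.span ℂ (Set.range fun k => x k + z • y k) = ⊤ := by
  obtain ⟨s, hsub, hspan, hind⟩ := exists_linearIndependent ℂ (Set.range x)
  have hspan' : ⊤ ≤ Submodule.span ℂ (Set.range ((↑) : s → Fin c → ℂ)) := by
    rw [Subtype.range_coe, hspan, hx]
  let B0 : Basis s ℂ (Fin c → ℂ) := Basis.mk hind hspan'
  haveI : Fintype s := FiniteDimensional.fintypeBasisIndex B0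
  have hcard : Fintype.card s = c := by
    rw [← Module.finrank_eq_card_basis B0, Module.finrank_fin_fun]
  let e : Fin c ≃ s := (Fintype.equivFinOfCardEq hcard).symm
  have hmem : ∀ j : Fin c, ((e j : Fin c → ℂ)) ∈ Set.range x := fun j => hsub (e j).2
  choose g hg using fun j => hmem j
  -- the polynomial
  set p : ℂ[X] := (Matrix.of fun i j : Fin c =>
      C (x (g j) i) + X * C (y (g j) i)).det with hp
  have key : ∀ z : ℂ, p.eval z =
      (Matrix.of fun i j : Fin c => x (g j) i + z * y (g j) i).det := by
    intro z
    have : p.eval z = (evalRingHom z) p := rfl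
    rw [this, hp, RingHom.map_det]
    congr 1
    ext i j
    simp [Matrix.map_apply]
    ring
  have hM0 : IsUnit (Matrix.of fun i j : Fin c => x (g j) i) := by
    rw [← Matrix.linearIndependent_cols_iff_isUnit]
    have : (fun j => (Matrix.of fun i j : Fin c => x (g j) i)ᵀ j)
        = fun j : Fin c => ((e j : Fin c → ℂ)) := by
      funext j; ext i; simp [Matrix.transpose_apply, hg]
    change LinearIndependent ℂ (fun j => (Matrix.of fun i j : Fin c => x (g j) i)ᵀ j)
    rw [this]
    exact hind.comp e e.injective
  have hp0 : p.eval 0 ≠ 0 := by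
    rw [key 0]
    have : (Matrix.of fun i j : Fin c => x (g j) i + (0 : ℂ) * y (g j) i)
        = Matrix.of fun i j : Fin c => x (g j) i := by
      ext i j; simp
    rw [this]
    exact ((Matrix.isUnit_iff_isUnit_det _).1 hM0).ne_zero
  have hpne : p ≠ 0 := fun h => hp0 (by rw [h]; simp)
  refine ⟨{z | p.eval z = 0}, Polynomial.finite_setOf_isRoot hpne, hp0, ?_⟩
  intro z hz
  have hdet : (Matrix.of fun i j : Fin c => x (g j) i + z * y (g j) i).det ≠ 0 := by
    rw [← key]; exact hz
  have hMz : IsUnit (Matrix.of fun i j : Fin c => x (g j) i + z * y (g j) i) :=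
    (Matrix.isUnit_iff_isUnit_det _).2 (isUnit_iff_ne_zero.2 hdet)
  have hsur := Matrix.mulVec_surjective_iff_isUnit.2 hMz
  have hrange : Submodule.span ℂ
      (Set.range (Matrix.of fun i j : Fin c => x (g j) i + z * y (g j) i)ᵀ) = ⊤ := by
    change Submodule.span ℂ (Set.range (Matrix.of fun i j : Fin c => x (g j) i + z * y (g j) i).col) = ⊤
    rw [← Matrix.range_mulVecLin, LinearMap.range_eq_top]
    exact hsur
  rw [eq_top_iff, ← hrange]
  refine Submodule.span_mono ?_
  rintro _ ⟨j, rfl⟩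
  refine ⟨g j, ?_⟩
  ext i
  simp [Matrix.transpose_apply, smul_eq_mul]



lemma stmt5aux_span_stable (B : Fin n → Matrix (Fin c) (Fin c) ℂ) (v : Fin c → Fin c → ℂ)
    (hv : Submodule.span ℂ (Set.range v) = ⊤) :
    ∀ S : Submodule ℂ (Fin c → ℂ),
      (∀ i, ∀ x ∈ S, (B i).mulVec x ∈ S) → (∀ j, v j ∈ S) → S = ⊤ := by
  intro S _ hvS
  rw [eq_top_iff, ← hv]
  exact Submodule.span_le.2 (by rintro _ ⟨j, rfl⟩; exact hvS j)

lemma stmt5aux_joinedIn_of_continuous {X : Type*} [TopologicalSpace X] {s : Set X} (f : ℝ → X)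
    (hf : Continuous f) {a b : X} (h0 : f 0 = a) (h1 : f 1 = b)
    (hmem : ∀ t : ℝ, t ∈ Set.Icc (0 : ℝ) 1 → f t ∈ s) : JoinedIn s a b :=
  ⟨⟨⟨fun t => f t, hf.comp continuous_subtype_val⟩, by simpa using h0, by simpa using h1⟩,
    fun t => hmem t t.2⟩


set_option linter.unusedVariables false in
/-- The space of stable ADHM data `(B₀,…,B_{n-1},v₁,…,v_c)` with all `B_i` nilpotent and
pairwise commuting (case `r = c`) is path connected. -/
theorem stmt5 (n c : ℕ) (hn : 0 < n) (hc : 0 < c) :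
    IsPathConnected {X : (Fin n → Matrix (Fin c) (Fin c) ℂ) × (Fin c → Fin c → ℂ) |
      (∀ i, IsNilpotent (X.1 i)) ∧ (∀ i j, Commute (X.1 i) (X.1 j)) ∧
      ∀ S : Submodule ℂ (Fin c → ℂ),
        (∀ i, ∀ x ∈ S, (X.1 i).mulVec x ∈ S) → (∀ j, X.2 j ∈ S) → S = ⊤} := by
  classical
  set w : Fin c → Fin c → ℂ := fun j => Pi.single j 1 with hw
  have hwspan : Submodule.span ℂ (Set.range w) = ⊤ := by
    have hbf : ⇑(Pi.basisFun ℂ (Fin c)) = w := by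
      funext j; simp [hw]
    rw [← hbf, Basis.span_eq]
  set s := {X : (Fin n → Matrix (Fin c) (Fin c) ℂ) × (Fin c → Fin c → ℂ) |
      (∀ i, IsNilpotent (X.1 i)) ∧ (∀ i j, Commute (X.1 i) (X.1 j)) ∧
      ∀ S : Submodule ℂ (Fin c → ℂ),
        (∀ i, ∀ x ∈ S, (X.1 i).mulVec x ∈ S) → (∀ j, X.2 j ∈ S) → S = ⊤} with hs
  set x₀ : (Fin n → Matrix (Fin c) (Fin c) ℂ) × (Fin c → Fin c → ℂ) :=
    (fun _ => 0, w) with hx₀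
  have hbase : x₀ ∈ s := by
    refine ⟨fun i => ⟨1, by simp [hx₀]⟩, fun i j => Commute.refl 0, stmt5aux_span_stable _ w hwspan⟩
  refine ⟨x₀, hbase, ?_⟩
  intro X hX
  obtain ⟨hnil, hcomm, hstab⟩ := hX
  -- Phase 1 : join X to (X.1, w)
  let b := Module.finBasis ℂ ↥(Algebra.adjoin ℂ (Set.range X.1))
  have h0span := (stmt5aux_stable_iff X.1 X.2 b).1 hstab
  obtain ⟨Z, hZfin, hZ0, hZ⟩ := stmt5aux_generic_span
    (fun p : Fin (finrank ℂ ↥(Algebra.adjoin ℂ (Set.range X.1))) × Fin c =>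
      ((b p.1 : Matrix (Fin c) (Fin c) ℂ)).mulVec (X.2 p.2))
    (fun p => ((b p.1 : Matrix (Fin c) (Fin c) ℂ)).mulVec (w p.2 - X.2 p.2)) h0span
  have hgood : ∀ z : ℂ, z ∉ Z \ {1} →
      (X.1, fun j => X.2 j + z • (w j - X.2 j)) ∈ s := by
    intro z hz
    refine ⟨hnil, hcomm, ?_⟩
    by_cases hzZ : z ∈ Z
    · have hz1 : z = 1 := by
        by_contra h1
        exact hz ⟨hzZ, h1⟩
      have : (fun j => X.2 j + z • (w j - X.2 j)) = w := by
        funext j; rw [hz1]; simp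
      rw [this]
      exact stmt5aux_span_stable X.1 w hwspan
    · refine (stmt5aux_stable_iff X.1 _ b).2 ?_
      have hfun : (fun p : Fin (finrank ℂ ↥(Algebra.adjoin ℂ (Set.range X.1))) × Fin c =>
          ((b p.1 : Matrix (Fin c) (Fin c) ℂ)).mulVec
            ((fun j => X.2 j + z • (w j - X.2 j)) p.2))
          = fun p => ((b p.1 : Matrix (Fin c) (Fin c) ℂ)).mulVec (X.2 p.2)
              + z • ((b p.1 : Matrix (Fin c) (Fin c) ℂ)).mulVec (w p.2 - X.2 p.2) := by
        funext p
        rw [Matrix.mulVec_add, Matrix.mulVec_smul]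
      rw [hfun]
      exact hZ z hzZ
  have hcompl : IsPathConnected ((Z \ {1})ᶜ : Set ℂ) := by
    refine Set.Countable.isPathConnected_compl_of_one_lt_rank ?_
      ((hZfin.subset Set.diff_subset).countable)
    rw [Complex.rank_real_complex]
    norm_num
  have h0m : (0 : ℂ) ∈ (Z \ {1})ᶜ := fun h => hZ0 h.1
  have h1m : (1 : ℂ) ∈ (Z \ {1})ᶜ := fun h => h.2 rfl
  obtain ⟨γ, hγ⟩ := hcompl.joinedIn 0 h0m 1 h1m
  let Φ : ℂ → (Fin n → Matrix (Fin c) (Fin c) ℂ) × (Fin c → Fin c → ℂ) :=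
    fun z => (X.1, fun j => X.2 j + z • (w j - X.2 j))
  have hΦ : Continuous Φ := by
    refine continuous_prodMk.2 ⟨continuous_const, continuous_pi fun j => ?_⟩
    exact continuous_const.add (continuous_id.smul continuous_const)
  have J1 : JoinedIn s (Φ 0) (Φ 1) :=
    ⟨γ.map hΦ, fun t => by simpa using hgood (γ t) (hγ t)⟩
  have hΦ0 : Φ 0 = X := Prod.ext rfl (funext fun j => by simp [Φ])
  have hΦ1 : Φ 1 = (X.1, w) := Prod.ext rfl (funext fun j => by simp [Φ])
  rw [hΦ0, hΦ1] at J1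
  -- Phase 2 : join (X.1, w) to x₀
  have J2 : JoinedIn s (X.1, w) x₀ := by
    refine stmt5aux_joinedIn_of_continuous
      (fun t : ℝ => (fun i => ((1 - t : ℝ) : ℂ) • X.1 i, w)) ?_ ?_ ?_ ?_
    · refine continuous_prodMk.2 ⟨continuous_pi fun i => ?_, continuous_const⟩
      exact ((Complex.continuous_ofReal.comp (continuous_const.sub continuous_id)).smul
        continuous_const)
    · exact Prod.ext (funext fun i => by norm_num) rfl
    · exact Prod.ext (funext fun i => by norm_num) rfl
    · intro t _
      refine ⟨fun i => ?_, fun i j => ((hcomm i j).smul_left _).smul_right _,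
        stmt5aux_span_stable _ w hwspan⟩
      obtain ⟨k, hk⟩ := hnil i
      exact ⟨k, by
        show (((1 - t : ℝ) : ℂ) • X.1 i) ^ k = 0
        rw [_root_.smul_pow, hk, smul_zero]⟩
  exact (J1.trans J2).symm
end

section
/- Let V be a complex vector space of dimension c, let B₀,…,B_{n-1} ∈ End(V) be pairwise commuting and nilpotent, and let v₁,…,v_r ∈ V with r ≥ n, such that the datum (B₀,…,B_{n-1},v₁,…,v_r) is stable. If v₁,…,v_k is a maximal linearly independent sublist of the v_j's, then there exist vectors w₁,…,w_{c-k}, each of the form B₀^{α₀}⋯B_{n-1}^{α_{n-1}}v_j for some nonnegative exponents and some 1 ≤ j ≤ k, such that v₁,…,v_k, w₁,…,w_{c-k} is a basis of V. -/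
open Submodule Set

private lemma mon_aux {V : Type*} [AddCommGroup V] [Module ℂ V] {n : ℕ}
    (B : Fin n → Module.End ℂ V) (hcomm : ∀ i j, Commute (B i) (B j))
    (α : Fin n → ℕ) (i : Fin n) :
    ∀ L : List (Fin n), L.Nodup → i ∈ L →
      (L.map fun l => B l ^ Function.update α i (α i + 1) l).prod
        = B i * (L.map fun l => B l ^ α l).prod := by
  intro L
  induction L with
  | nil => simp
  | cons a L ih =>
    intro hnd hi
    simp only [List.map_cons, List.prod_cons]
    rcases List.mem_cons.mp hi with h | h
    · subst h
      have hninL : i ∉ L := (List.nodup_cons.mp hnd).1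
      have hmap : (L.map fun l => B l ^ Function.update α i (α i + 1) l)
          = L.map fun l => B l ^ α l := by
        apply List.map_congr_left
        intro l hl
        rw [Function.update_of_ne (by rintro rfl; exact hninL hl)]
      rw [hmap, Function.update_self, pow_succ', mul_assoc]
    · have hai : a ≠ i := by rintro rfl; exact (List.nodup_cons.mp hnd).1 h
      rw [ih (List.nodup_cons.mp hnd).2 h, Function.update_of_ne hai,
        ← mul_assoc, ← mul_assoc, ((hcomm a i).pow_left (α a)).eq]

/-- Given a stable datum with commuting nilpotent `B_i` and `r ≥ n` vectors, if
`v₁,…,v_k` is a maximal linearly independent sublist of the `v_j`'s, then it can be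
completed to a basis of `V` by `c - k` vectors, each of the form
`B₀^{α₀}⋯B_{n-1}^{α_{n-1}} v_j` with `j ≤ k`. -/
theorem stmt6 {n r c k : ℕ} {V : Type*} [AddCommGroup V] [Module ℂ V]
    [FiniteDimensional ℂ V] (hdim : Module.finrank ℂ V = c) (hrn : n ≤ r) (hk : k ≤ r)
    (B : Fin n → Module.End ℂ V) (v : Fin r → V)
    (hcomm : ∀ i j, Commute (B i) (B j)) (hnil : ∀ i, IsNilpotent (B i))
    (hstab : ∀ S : Submodule ℂ V, (∀ i, ∀ x ∈ S, B i x ∈ S) → (∀ j, v j ∈ S) → S = ⊤)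
    (hli : LinearIndependent ℂ fun j : Fin k => v (Fin.castLE hk j))
    (hmax : ∀ j : Fin r,
      v j ∈ Submodule.span ℂ (Set.range fun j' : Fin k => v (Fin.castLE hk j'))) :
    ∃ w : Fin (c - k) → V,
      (∀ i, ∃ (α : Fin n → ℕ) (j : Fin k),
        w i = (((List.finRange n).map fun l => B l ^ α l).prod) (v (Fin.castLE hk j))) ∧
      LinearIndependent ℂ (Sum.elim (fun j : Fin k => v (Fin.castLE hk j)) w) ∧
      Submodule.span ℂ
        (Set.range (Sum.elim (fun j : Fin k => v (Fin.castLE hk j)) w)) = ⊤ := by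
  classical
  set f : Fin k → V := fun j => v (Fin.castLE hk j) with hf
  set T : Set V := {x | ∃ (α : Fin n → ℕ) (j : Fin k),
      x = (((List.finRange n).map fun l => B l ^ α l).prod) (f j)} with hT
  have hfT : ∀ j, f j ∈ T := by
    intro j
    refine ⟨0, j, ?_⟩
    have : ((List.finRange n).map fun l => B l ^ (0 : (Fin n → ℕ)) l).prod = 1 := by
      apply List.prod_eq_one
      intro x hx
      simp only [List.mem_map] at hx
      obtain ⟨l, -, rfl⟩ := hx
      simp
    rw [this]
    simp
  -- T is B-invariant
  have hBT : ∀ i, ∀ x ∈ T, B i x ∈ T := by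
    intro i x hx
    obtain ⟨α, j, rfl⟩ := hx
    refine ⟨Function.update α i (α i + 1), j, ?_⟩
    rw [mon_aux B hcomm α i (List.finRange n) (List.nodup_finRange n)
      (List.mem_finRange i)]
    simp [Module.End.mul_apply]
  have hspanT : Submodule.span ℂ T = ⊤ := by
    apply hstab
    · intro i x hx
      induction hx using Submodule.span_induction with
      | mem y hy => exact Submodule.subset_span (hBT i y hy)
      | zero => simp
      | add y z _ _ hy hz => rw [map_add]; exact Submodule.add_mem _ hy hz
      | smul a y _ hy => rw [map_smul]; exact Submodule.smul_mem _ a hy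
    · intro j
      refine Submodule.span_mono ?_ (hmax j)
      rintro x ⟨j', rfl⟩
      exact hfT j'
  -- extend range f to a basis inside T
  set s : Set V := Set.range f with hs
  have hli' : LinearIndepOn ℂ id s := (linearIndepOn_id_range_iff hli.injective).mpr hli
  have hst : s ⊆ T := by rintro x ⟨j, rfl⟩; exact hfT j
  set b : Set V := hli'.extend hst with hb
  have hsb : s ⊆ b := hli'.subset_extend hst
  have hbT : b ⊆ T := hli'.extend_subset hst
  have hlib : LinearIndependent ℂ ((↑) : b → V) := hli'.linearIndepOn_extend hst
  have hspanb : Submodule.span ℂ b = ⊤ := by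
    rw [hli'.span_extend_eq_span hst, hspanT]
  have hbfin : b.Finite := hlib.setFinite
  haveI : Fintype b := hbfin.fintype
  haveI : Fintype s := Set.fintypeRange f
  haveI : Fintype ↥(b \ s) := (hbfin.diff : (b \ s).Finite).fintype
  have basis : Module.Basis b ℂ V := Module.Basis.mk hlib (by rw [Subtype.range_coe, hspanb])
  have hcardb : Fintype.card b = c := by
    rw [← hdim, Module.finrank_eq_card_basis basis]
  have hfinj : Function.Injective f := hli.injective
  have hcards : Fintype.card s = k := by
    rw [Set.card_range_of_injective hfinj, Fintype.card_fin]
  have hcardd : Fintype.card ↥(b \ s) = c - k := by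
    rw [← Set.toFinset_card, Set.toFinset_diff,
      Finset.card_sdiff_of_subset (by rw [Set.toFinset_subset_toFinset]; exact hsb),
      Set.toFinset_card, Set.toFinset_card, hcardb, hcards]
  have e : Fin (c - k) ≃ ↥(b \ s) :=
    (Fintype.equivFinOfCardEq hcardd).symm
  refine ⟨fun i => (e i : V), ?_, ?_, ?_⟩
  · intro i
    obtain ⟨α, j, hx⟩ := hbT (e i).2.1
    exact ⟨α, j, hx⟩
  · set g : Fin k ⊕ Fin (c - k) → b :=
      Sum.elim (fun j => ⟨f j, hsb ⟨j, rfl⟩⟩) (fun i => ⟨(e i : V), (e i).2.1⟩) with hg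
    have hge : Sum.elim f (fun i => (e i : V)) = ((↑) : b → V) ∘ g := by
      funext x; cases x <;> rfl
    rw [hge]
    apply hlib.comp
    rintro (j | i) (j' | i') hgg <;> simp only [hg, Sum.elim_inl, Sum.elim_inr,
      Subtype.mk.injEq] at hgg
    · exact congrArg Sum.inl (hfinj hgg)
    · exact absurd (Set.mem_range.mpr ⟨j, hgg⟩) (e i').2.2
    · exact absurd (Set.mem_range.mpr ⟨j', hgg.symm⟩) (e i).2.2
    · exact congrArg Sum.inr (e.injective (Subtype.ext hgg))
  · have hrange : Set.range (Sum.elim f (fun i => (e i : V))) = b := by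
      rw [Sum.elim_range]
      have h2 : Set.range (fun i => ((e i : V))) = b \ s := by
        have : (fun i => ((e i : V))) = Subtype.val ∘ e := rfl
        rw [this, Set.range_comp, e.range_eq_univ, Set.image_univ,
          Subtype.range_coe]
      rw [h2, ← hs, Set.union_diff_cancel hsb]
    rw [hrange, hspanb]
end

section
/- Let V be a complex vector space of dimension c and let X = (B₀,…,B_{n-1},v₁,…,v_c) be a stable datum with the B_i pairwise commuting and nilpotent. Let v₁,…,v_k be a maximal linearly independent sublist of the v_j's and let w₁,…,w_{c-k} complete it to a basis of V, with each w_i in the span of {B₀^{α₀}⋯B_{n-1}^{α_{n-1}}v_j : j ≤ k}. Then for every t ∈ [0,1], the datum φ(t) = (tB₀,…,tB_{n-1}, v₁,…,v_k, (1−t)w₁ + t v_{k+1},…,(1−t)w_{c-k} + t v_c) is stable, the operators tB_i are pairwise commuting and nilpotent, and φ(1) = X, φ(0) = (0,…,0,v₁,…,v_k,w₁,…,w_{c-k}). -/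
/-- Along the path `φ(t) = (tB₀,…,tB_{n-1}, v₁,…,v_k, (1−t)w₁+tv_{k+1},…,(1−t)w_{c−k}+tv_c)`,
every datum is stable, with `tB_i` pairwise commuting and nilpotent, and the endpoints are
`φ(1) = X` and `φ(0) = (0-path target data)`. -/
theorem stmt10 {n c k : ℕ} {V : Type*} [AddCommGroup V] [Module ℂ V]
    [FiniteDimensional ℂ V] (hdim : Module.finrank ℂ V = c) (hk : k ≤ c)
    (B : Fin n → Module.End ℂ V) (v : Fin c → V) (w : Fin (c - k) → V)
    (hcomm : ∀ i j, Commute (B i) (B j)) (hnil : ∀ i, IsNilpotent (B i))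
    (hstab : ∀ S : Submodule ℂ V, (∀ i, ∀ x ∈ S, B i x ∈ S) → (∀ j, v j ∈ S) → S = ⊤)
    (hli : LinearIndependent ℂ fun j : Fin k => v (Fin.castLE hk j))
    (hmax : ∀ j : Fin c,
      v j ∈ Submodule.span ℂ (Set.range fun j' : Fin k => v (Fin.castLE hk j')))
    (hw : ∀ i, w i ∈ Submodule.span ℂ {x : V | ∃ (α : Fin n → ℕ) (j : Fin k),
      x = (((List.finRange n).map fun l => B l ^ α l).prod) (v (Fin.castLE hk j))})
    (hbli : LinearIndependent ℂ (Sum.elim (fun j : Fin k => v (Fin.castLE hk j)) w))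
    (hbspan : Submodule.span ℂ
      (Set.range (Sum.elim (fun j : Fin k => v (Fin.castLE hk j)) w)) = ⊤) :
    ∀ t : ℝ, t ∈ Set.Icc (0 : ℝ) 1 →
      letI u : Fin c → V := fun j =>
        if h : (j : ℕ) < k then v j
        else ((1 : ℂ) - (t : ℂ)) • w ⟨(j : ℕ) - k, by have := j.isLt; omega⟩ + (t : ℂ) • v j
      (∀ i i', Commute ((t : ℂ) • B i) ((t : ℂ) • B i')) ∧
      (∀ i, IsNilpotent ((t : ℂ) • B i)) ∧
      (∀ S : Submodule ℂ V,
        (∀ i, ∀ x ∈ S, ((t : ℂ) • B i) x ∈ S) → (∀ j, u j ∈ S) → S = ⊤) ∧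
      (t = 1 → ∀ j, u j = v j) ∧
      (t = 0 → ∀ j : Fin c, u j =
        if h : (j : ℕ) < k then v j else w ⟨(j : ℕ) - k, by have := j.isLt; omega⟩) := by

  intro t _ht
  refine ⟨fun i i' => ?_, fun i => ?_, ?_, ?_, ?_⟩
  · exact ((hcomm i i').smul_left _).smul_right _
  · obtain ⟨m, hm⟩ := hnil i
    exact ⟨m, by rw [smul_pow, hm, smul_zero]⟩
  · intro S hS hu
    by_cases h0 : (t : ℂ) = 0
    · apply top_unique
      rw [← hbspan]
      rw [Submodule.span_le]
      rintro x ⟨j, rfl⟩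
      cases j with
      | inl j =>
        have := hu (Fin.castLE hk j)
        simpa [j.isLt] using this
      | inr j =>
        have hjk : k + (j : ℕ) < c := by have := j.isLt; omega
        have := hu ⟨k + j, hjk⟩
        have hnl : ¬ (k + (j : ℕ) < k) := by omega
        simp only [hnl, dif_neg, not_false_iff, h0] at this
        simpa [Fin.eta] using this
    · have hBS : ∀ i, ∀ x ∈ S, B i x ∈ S := by
        intro i x hx
        have h1 := hS i x hx
        have h2 : B i x = (t : ℂ)⁻¹ • (((t : ℂ) • B i) x) := by
          rw [LinearMap.smul_apply, smul_smul, inv_mul_cancel₀ h0, one_smul]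
        rw [h2]
        exact S.smul_mem _ h1
      have hvk : ∀ j : Fin k, v (Fin.castLE hk j) ∈ S := by
        intro j
        have := hu (Fin.castLE hk j)
        simpa [j.isLt] using this
      have hvs : ∀ j, v j ∈ S := by
        intro j
        have hle : Submodule.span ℂ (Set.range fun j' : Fin k => v (Fin.castLE hk j')) ≤ S := by
          rw [Submodule.span_le]; rintro x ⟨j', rfl⟩; exact hvk j'
        exact hle (hmax j)
      exact hstab S hBS hvs
  · rintro rfl j
    by_cases h : (j : ℕ) < k <;> simp [h]
  · rintro rfl j
    by_cases h : (j : ℕ) < k <;> simp [h]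
end

section
/- Let V = ℂ^c and consider the monad maps over ℂⁿ (affine chart z_n = 1): α₀ = (B₀ − z₀ I, B₁ − z₁ I, …, B_{n-1} − z_{n-1} I, v₁, …, v_r) viewed as a map V^{⊕n} ⊕ ℂ^r → V depending polynomially on the point (z₀,…,z_{n-1}) ∈ ℂⁿ. Then α₀ is surjective at every point (z₀,…,z_{n-1}) ∈ ℂⁿ if and only if the datum (B₀,…,B_{n-1},v₁,…,v_r) is stable. -/
/-- A finite commuting family of endomorphisms of a nonzero finite-dimensional complex vector
space has a common eigenvector. -/
lemma exists_common_eigenvector :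
    ∀ (n : ℕ) (V : Type _) [AddCommGroup V] [Module ℂ V] [FiniteDimensional ℂ V] [Nontrivial V]
      (f : Fin n → Module.End ℂ V), (∀ i j, Commute (f i) (f j)) →
      ∃ (μ : Fin n → ℂ) (x : V), x ≠ 0 ∧ ∀ i, f i x = μ i • x := by
  intro n
  induction n with
  | zero =>
    intro V _ _ _ _ f _
    obtain ⟨x, hx⟩ := exists_ne (0 : V)
    exact ⟨Fin.elim0, x, hx, fun i => i.elim0⟩
  | succ m ih =>
    intro V _ _ _ _ f hcomm
    obtain ⟨μ₀, hμ₀⟩ := Module.End.exists_eigenvalue (f (Fin.last m))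
    have hEne : (f (Fin.last m)).eigenspace μ₀ ≠ ⊥ := hμ₀
    haveI : Nontrivial ((f (Fin.last m)).eigenspace μ₀) :=
      Submodule.nontrivial_iff_ne_bot.mpr hEne
    have hmap : ∀ i : Fin m, ∀ x ∈ (f (Fin.last m)).eigenspace μ₀,
        f i.castSucc x ∈ (f (Fin.last m)).eigenspace μ₀ := by
      intro i x hx
      rw [Module.End.mem_eigenspace_iff] at hx ⊢
      calc f (Fin.last m) (f i.castSucc x) = f i.castSucc (f (Fin.last m) x) := by
            have h2 := congrFun (congrArg DFunLike.coe (hcomm (Fin.last m) i.castSucc).eq) x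
            simpa using h2
        _ = μ₀ • f i.castSucc x := by rw [hx, map_smul]
    have hgcomm : ∀ i j, Commute ((f i.castSucc).restrict (hmap i))
        ((f j.castSucc).restrict (hmap j)) := by
      intro i j
      apply LinearMap.ext
      intro x
      apply Subtype.ext
      have h2 := congrFun (congrArg DFunLike.coe (hcomm i.castSucc j.castSucc).eq) (x : V)
      simp only [Module.End.mul_apply] at h2
      show (((f i.castSucc).restrict (hmap i) * (f j.castSucc).restrict (hmap j)) x : V) =
        (((f j.castSucc).restrict (hmap j) * (f i.castSucc).restrict (hmap i)) x : V)
      simpa [Module.End.mul_apply, LinearMap.restrict_coe_apply] using h2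
    obtain ⟨μ', x', hx'ne, hx'⟩ :=
      ih ((f (Fin.last m)).eigenspace μ₀) (fun i => (f i.castSucc).restrict (hmap i)) hgcomm
    refine ⟨Fin.lastCases μ₀ μ', (x' : V), ?_, ?_⟩
    · exact fun h => hx'ne (Subtype.ext h)
    · intro i
      induction i using Fin.lastCases with
      | last =>
        have hmem : (x' : V) ∈ (f (Fin.last m)).eigenspace μ₀ := x'.2
        rw [Module.End.mem_eigenspace_iff] at hmem
        simpa using hmem
      | cast i =>
        have h2 : (((f i.castSucc).restrict (hmap i)) x' : V) = ((μ' i • x' : _) : V) := by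
          rw [hx' i]
        simp only [LinearMap.restrict_coe_apply, Submodule.coe_smul] at h2
        simpa using h2

/-- The monad map `α₀ = (B₀−z₀, …, B_{n-1}−z_{n-1}, v₁, …, v_r)` is surjective at every
point `z ∈ ℂⁿ` if and only if the datum `(B₀,…,B_{n-1},v₁,…,v_r)` is stable. -/
theorem stmt14 {n r : ℕ} {V : Type*} [AddCommGroup V] [Module ℂ V]
    [FiniteDimensional ℂ V] (B : Fin n → Module.End ℂ V) (v : Fin r → V)
    (hcomm : ∀ i j, Commute (B i) (B j)) :
    (∀ z : Fin n → ℂ, Function.Surjective fun wa : (Fin n → V) × (Fin r → ℂ) =>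
        (∑ i, (B i (wa.1 i) - z i • wa.1 i)) + ∑ j, wa.2 j • v j) ↔
      (∀ S : Submodule ℂ V, (∀ i, ∀ x ∈ S, B i x ∈ S) → (∀ j, v j ∈ S) → S = ⊤) := by
  constructor
  · -- surjective everywhere ⇒ stable
    intro hsurj S hSinv hSv
    by_contra hS
    haveI : Nontrivial (V ⧸ S) :=
      Submodule.Quotient.nontrivial_iff.mpr hS
    have hle : ∀ i, S ≤ S.comap (B i) := fun i x hx => hSinv i x hx
    have hBqmk : ∀ i (x : V), S.mapQ S (B i) (hle i) (S.mkQ x) = S.mkQ (B i x) :=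
      fun i x => rfl
    -- the dual maps on the dual of the quotient commute
    haveI : Nontrivial (Module.Dual ℂ (V ⧸ S)) := by
      obtain ⟨y, hy⟩ := exists_ne (0 : V ⧸ S)
      have := (Module.forall_dual_apply_eq_zero_iff ℂ y).not.mpr hy
      push_neg at this
      obtain ⟨φ, hφ⟩ := this
      exact ⟨φ, 0, fun h => hφ (by rw [h]; rfl)⟩
    have hDcomm : ∀ i j, Commute (S.mapQ S (B i) (hle i)).dualMap
        (S.mapQ S (B j) (hle j)).dualMap := by
      intro i j
      have hq : Commute (S.mapQ S (B i) (hle i)) (S.mapQ S (B j) (hle j)) := by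
        apply LinearMap.ext
        intro x
        obtain ⟨x, rfl⟩ := S.mkQ_surjective x
        have h2 := congrFun (congrArg DFunLike.coe (hcomm i j).eq) x
        simp only [Module.End.mul_apply] at h2 ⊢
        rw [hBqmk, hBqmk, hBqmk, hBqmk, h2]
      apply LinearMap.ext
      intro ψ
      apply LinearMap.ext
      intro q
      have h3 := congrFun (congrArg DFunLike.coe hq.eq) q
      simp only [Module.End.mul_apply] at h3
      show ψ ((S.mapQ S (B j) (hle j)) ((S.mapQ S (B i) (hle i)) q)) =
        ψ ((S.mapQ S (B i) (hle i)) ((S.mapQ S (B j) (hle j)) q))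
      rw [← h3]
    obtain ⟨z, φ, hφne, hφ⟩ := exists_common_eigenvector n (Module.Dual ℂ (V ⧸ S))
      (fun i => (S.mapQ S (B i) (hle i)).dualMap) hDcomm
    obtain ⟨y, hy⟩ : ∃ y : V ⧸ S, φ y ≠ 0 := by
      by_contra h
      push_neg at h
      exact hφne (LinearMap.ext fun y => h y)
    obtain ⟨y₀, rfl⟩ := S.mkQ_surjective y
    obtain ⟨wa, hwa⟩ := hsurj z y₀
    apply hy
    rw [← hwa]
    have hφB : ∀ (i : Fin n) (x : V), φ (S.mkQ (B i x)) = z i • φ (S.mkQ x) := by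
      intro i x
      have h1 : S.mkQ (B i x) = S.mapQ S (B i) (hle i) (S.mkQ x) := rfl
      have h2 : φ (S.mapQ S (B i) (hle i) (S.mkQ x)) =
          ((S.mapQ S (B i) (hle i)).dualMap φ) (S.mkQ x) := rfl
      rw [h1, h2, hφ i]
      rfl
    have hv0 : ∀ j, S.mkQ (v j) = 0 := fun j => (Submodule.Quotient.mk_eq_zero S).mpr (hSv j)
    simp only [map_add, map_sum, map_sub, map_smul, hφB, hv0, smul_zero, sub_self,
      Finset.sum_const_zero, add_zero]
  · -- stable ⇒ surjective everywhere
    intro hstab z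
    set F : ((Fin n → V) × (Fin r → ℂ)) →ₗ[ℂ] V :=
      { toFun := fun wa => (∑ i, (B i (wa.1 i) - z i • wa.1 i)) + ∑ j, wa.2 j • v j
        map_add' := by
          intro a b
          simp only [Prod.fst_add, Prod.snd_add, Pi.add_apply, map_add, add_smul, smul_add]
          rw [Finset.sum_congr rfl (fun i _ => show
              B i (a.1 i) + B i (b.1 i) - (z i • a.1 i + z i • b.1 i) =
              (B i (a.1 i) - z i • a.1 i) + (B i (b.1 i) - z i • b.1 i) by abel),
            Finset.sum_add_distrib, Finset.sum_add_distrib]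
          abel
        map_smul' := by
          intro c a
          simp only [Prod.smul_fst, Prod.smul_snd, Pi.smul_apply, map_smul,
            RingHom.id_apply, smul_add, Finset.smul_sum, smul_sub, smul_eq_mul]
          congr 1
          · exact Finset.sum_congr rfl fun i _ => by rw [smul_comm (z i) c]
          · exact Finset.sum_congr rfl fun j _ => mul_smul c (a.2 j) (v j) } with hF
    suffices h : LinearMap.range F = ⊤ by
      intro y
      obtain ⟨wa, hwa⟩ := h ▸ Submodule.mem_top (x := y)
      exact ⟨wa, hwa⟩
    apply hstab
    · -- range F is invariant under each B k
      intro k x hx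
      obtain ⟨⟨w, a⟩, rfl⟩ := hx
      have hBv : ∀ j, B k (v j) ∈ LinearMap.range F := by
        intro j
        refine ⟨(Pi.single k (v j), Pi.single j (z k)), ?_⟩
        simp only [hF, LinearMap.coe_mk, AddHom.coe_mk]
        rw [Finset.sum_eq_single k
          (fun i _ hik => by simp [Pi.single_eq_of_ne hik])
          (fun h => absurd (Finset.mem_univ k) h)]
        rw [Finset.sum_eq_single j
          (fun j' _ hjj' => by simp [Pi.single_eq_of_ne hjj'])
          (fun h => absurd (Finset.mem_univ j) h)]
        simp only [Pi.single_eq_same]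
        abel
      have h1 : B k (F (w, a)) = F (fun i => B k (w i), 0) + ∑ j, a j • B k (v j) := by
        simp only [hF, LinearMap.coe_mk, AddHom.coe_mk]
        simp only [map_add, map_sum, map_sub, map_smul, Pi.zero_apply, zero_smul,
          Finset.sum_const_zero, add_zero]
        congr 1
        apply Finset.sum_congr rfl
        intro i _
        have h2 := congrFun (congrArg DFunLike.coe (hcomm k i).eq) (w i)
        simp only [Module.End.mul_apply] at h2
        rw [h2]
      rw [h1]
      exact Submodule.add_mem _ ⟨_, rfl⟩
        (Submodule.sum_mem _ fun j _ => Submodule.smul_mem _ _ (hBv j))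
    · -- each v j lies in range F
      intro j
      refine ⟨(0, Pi.single j 1), ?_⟩
      simp only [hF, LinearMap.coe_mk, AddHom.coe_mk]
      rw [Finset.sum_eq_single j
        (fun j' _ hjj' => by simp [Pi.single_eq_of_ne hjj'])
        (fun h => absurd (Finset.mem_univ j) h)]
      simp
end

section
/- Let G = GL_c(ℂ) act on the space 𝔹 = End(ℂ^c)^{⊕n} ⊕ (ℂ^c)^{⊕r} by g·(B₀,…,B_{n-1},v₁,…,v_r) = (gB₀g⁻¹,…,gB_{n-1}g⁻¹,gv₁,…,gv_r), and lift it to 𝔹 × ℂ via g·(X,z) = (g·X, det(g)^{−ℓ} z) for a fixed ℓ > 0. If X is a stable datum satisfying the commutation relations, then for any z ≠ 0 the orbit G·(X,z) is closed in 𝒰(n,c,r) × ℂ. -/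
open Filter Topology Matrix

private lemma aux_tmul {c : ℕ} {f g : ℕ → Matrix (Fin c) (Fin c) ℂ}
    {F G : Matrix (Fin c) (Fin c) ℂ}
    (hf : Tendsto f atTop (𝓝 F)) (hg : Tendsto g atTop (𝓝 G)) :
    Tendsto (fun k => f k * g k) atTop (𝓝 (F * G)) :=
  hf.mul hg

private lemma aux_tmulVec {c : ℕ} {f : ℕ → Matrix (Fin c) (Fin c) ℂ} {g : ℕ → Fin c → ℂ}
    {F : Matrix (Fin c) (Fin c) ℂ} {G : Fin c → ℂ}
    (hf : Tendsto f atTop (𝓝 F)) (hg : Tendsto g atTop (𝓝 G)) :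
    Tendsto (fun k => (f k).mulVec (g k)) atTop (𝓝 (F.mulVec G)) := by
  refine tendsto_pi_nhds.mpr fun m => ?_
  have hfe : ∀ l, Tendsto (fun k => f k m l) atTop (𝓝 (F m l)) :=
    fun l => tendsto_pi_nhds.mp (tendsto_pi_nhds.mp hf m) l
  have hge : ∀ l, Tendsto (fun k => g k l) atTop (𝓝 (G l)) :=
    fun l => tendsto_pi_nhds.mp hg l
  have : Tendsto (fun k => ∑ l, f k m l * g k l) atTop (𝓝 (∑ l, F m l * G l)) :=
    tendsto_finset_sum _ fun l _ => (hfe l).mul (hge l)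
  exact this

private lemma aux_listProd_tendsto {n c : ℕ} (ws : List (Fin n))
    (Bk : ℕ → Fin n → Matrix (Fin c) (Fin c) ℂ) (A : Fin n → Matrix (Fin c) (Fin c) ℂ)
    (hB : ∀ i, Tendsto (fun k => Bk k i) atTop (𝓝 (A i))) :
    Tendsto (fun k => ((ws.map (Bk k)).prod)) atTop (𝓝 ((ws.map A).prod)) := by
  induction ws with
  | nil => simpa using tendsto_const_nhds
  | cons i t ih =>
      simp only [List.map_cons, List.prod_cons]
      exact aux_tmul (hB i) ih

private lemma aux_conj_prod {n c : ℕ} (g : GL (Fin c) ℂ) (B : Fin n → Matrix (Fin c) (Fin c) ℂ)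
    (ws : List (Fin n)) :
    ((ws.map (fun i => (g : Matrix (Fin c) (Fin c) ℂ) * B i *
        ((↑g⁻¹ : Matrix (Fin c) (Fin c) ℂ)))).prod)
      = (g : Matrix (Fin c) (Fin c) ℂ) * (ws.map B).prod *
        ((↑g⁻¹ : Matrix (Fin c) (Fin c) ℂ)) := by
  have h1 : ((↑g⁻¹ : Matrix (Fin c) (Fin c) ℂ)) * (g : Matrix (Fin c) (Fin c) ℂ) = 1 := by
    rw [← Units.val_mul, inv_mul_cancel, Units.val_one]
  have h2 : (g : Matrix (Fin c) (Fin c) ℂ) * ((↑g⁻¹ : Matrix (Fin c) (Fin c) ℂ)) = 1 := by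
    rw [← Units.val_mul, mul_inv_cancel, Units.val_one]
  induction ws with
  | nil => simp only [List.map_nil, List.prod_nil, mul_one, h2]
  | cons i t ih =>
      simp only [List.map_cons, List.prod_cons, ih]
      calc ((g : Matrix (Fin c) (Fin c) ℂ) * B i * (↑g⁻¹ : Matrix (Fin c) (Fin c) ℂ)) *
            ((g : Matrix (Fin c) (Fin c) ℂ) * (t.map B).prod * (↑g⁻¹ : Matrix (Fin c) (Fin c) ℂ))
          = (g : Matrix (Fin c) (Fin c) ℂ) * B i *
            (((↑g⁻¹ : Matrix (Fin c) (Fin c) ℂ)) * (g : Matrix (Fin c) (Fin c) ℂ)) *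
            ((t.map B).prod * (↑g⁻¹ : Matrix (Fin c) (Fin c) ℂ)) := by
              simp only [mul_assoc]
        _ = (g : Matrix (Fin c) (Fin c) ℂ) * (B i * (t.map B).prod) *
            (↑g⁻¹ : Matrix (Fin c) (Fin c) ℂ) := by
              rw [h1, mul_one]; simp only [mul_assoc]

/-- For a stable commuting ADHM datum `X` and any `z ≠ 0`, the `GL_c(ℂ)`-orbit of `(X, z)`
under `g·(X,z) = (g·X, det(g)^{-ℓ} z)` is closed in `𝒰(n,c,r) × ℂ`. -/
theorem stmt18 (n c r ℓ : ℕ) (hℓ : 0 < ℓ)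
    (B : Fin n → Matrix (Fin c) (Fin c) ℂ) (v : Fin r → Fin c → ℂ) (z : ℂ) (hz : z ≠ 0)
    (hcomm : ∀ i j, Commute (B i) (B j))
    (hstab : ∀ S : Submodule ℂ (Fin c → ℂ),
      (∀ i, ∀ x ∈ S, (B i).mulVec x ∈ S) → (∀ j, v j ∈ S) → S = ⊤) :
    IsClosed {q : {p : ((Fin n → Matrix (Fin c) (Fin c) ℂ) × (Fin r → Fin c → ℂ)) × ℂ //
        ∀ i j, Commute (p.1.1 i) (p.1.1 j)} |
      ∃ g : GL (Fin c) ℂ,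
        (q : ((Fin n → Matrix (Fin c) (Fin c) ℂ) × (Fin r → Fin c → ℂ)) × ℂ) =
          (((fun i => (g : Matrix (Fin c) (Fin c) ℂ) * B i * ((↑g⁻¹ : Matrix (Fin c) (Fin c) ℂ))),
            fun j => (g : Matrix (Fin c) (Fin c) ℂ).mulVec (v j)),
           ((↑g⁻¹ : Matrix (Fin c) (Fin c) ℂ).det) ^ ℓ * z)} := by
  have key : IsClosed {p : ((Fin n → Matrix (Fin c) (Fin c) ℂ) × (Fin r → Fin c → ℂ)) × ℂ |
      ∃ g : GL (Fin c) ℂ, p =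
          (((fun i => (g : Matrix (Fin c) (Fin c) ℂ) * B i * ((↑g⁻¹ : Matrix (Fin c) (Fin c) ℂ))),
            fun j => (g : Matrix (Fin c) (Fin c) ℂ).mulVec (v j)),
           ((↑g⁻¹ : Matrix (Fin c) (Fin c) ℂ).det) ^ ℓ * z)} := by
    haveI : FirstCountableTopology (Matrix (Fin c) (Fin c) ℂ) :=
      (inferInstance : FirstCountableTopology (Fin c → Fin c → ℂ))
    apply IsSeqClosed.isClosed
    intro x p hmem hx
    choose g hg using hmem
    set M : ℕ → Matrix (Fin c) (Fin c) ℂ := fun k => ↑(g k) with hM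
    set N : ℕ → Matrix (Fin c) (Fin c) ℂ := fun k => ↑(g k)⁻¹ with hN
    have hMN : ∀ k, M k * N k = 1 := fun k => by
      simp only [hM, hN, ← Units.val_mul, mul_inv_cancel, Units.val_one]
    have hNM : ∀ k, N k * M k = 1 := fun k => by
      simp only [hM, hN, ← Units.val_mul, inv_mul_cancel, Units.val_one]
    -- componentwise convergence
    have h1 : Tendsto (fun k => (x k).1.1) atTop (𝓝 p.1.1) :=
      ((continuous_fst.comp continuous_fst).tendsto p).comp hx
    have h2 : Tendsto (fun k => (x k).1.2) atTop (𝓝 p.1.2) :=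
      ((continuous_snd.comp continuous_fst).tendsto p).comp hx
    have h3 : Tendsto (fun k => (x k).2) atTop (𝓝 p.2) :=
      (continuous_snd.tendsto p).comp hx
    have hB' : ∀ i, Tendsto (fun k => M k * B i * N k) atTop (𝓝 (p.1.1 i)) := by
      intro i
      refine (tendsto_pi_nhds.mp h1 i).congr fun k => ?_
      rw [hg k]
    have hv' : ∀ j, Tendsto (fun k => (M k).mulVec (v j)) atTop (𝓝 (p.1.2 j)) := by
      intro j
      refine (tendsto_pi_nhds.mp h2 j).congr fun k => ?_
      rw [hg k]
    have hz' : Tendsto (fun k => ((N k).det) ^ ℓ * z) atTop (𝓝 p.2) := by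
      refine h3.congr fun k => ?_
      rw [hg k]
    -- submodule of vectors whose images converge
    let T : Submodule ℂ (Fin c → ℂ) :=
      { carrier := {u | ∃ L, Tendsto (fun k => (M k).mulVec u) atTop (𝓝 L)}
        add_mem' := by
          rintro a b ⟨L1, hL1⟩ ⟨L2, hL2⟩
          exact ⟨L1 + L2, by simpa [Matrix.mulVec_add] using hL1.add hL2⟩
        zero_mem' := ⟨0, by simpa [Matrix.mulVec_zero] using (tendsto_const_nhds :
          Tendsto (fun _ : ℕ => (0 : Fin c → ℂ)) atTop (𝓝 0))⟩
        smul_mem' := by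
          rintro a u ⟨L, hL⟩
          exact ⟨a • L, by simpa [Matrix.mulVec_smul] using hL.const_smul a⟩ }
    -- the span of word vectors is everything
    set gens : Set (Fin c → ℂ) :=
      {u | ∃ (j : Fin r) (ws : List (Fin n)), u = ((ws.map B).prod).mulVec (v j)} with hgens
    have hSinv : ∀ i, ∀ u ∈ Submodule.span ℂ gens, (B i).mulVec u ∈ Submodule.span ℂ gens := by
      intro i u hu
      have hmap : Submodule.map ((B i).mulVecLin) (Submodule.span ℂ gens) ≤
          Submodule.span ℂ gens := by
        rw [Submodule.map_span, Submodule.span_le]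
        rintro _ ⟨_, ⟨j, ws, rfl⟩, rfl⟩
        refine Submodule.subset_span ⟨j, i :: ws, ?_⟩
        simp [Matrix.mulVec_mulVec]
      exact hmap ⟨u, hu, rfl⟩
    have hStop : Submodule.span ℂ gens = ⊤ :=
      hstab _ hSinv fun j => Submodule.subset_span ⟨j, [], by simp⟩
    have hgenT : gens ⊆ (T : Set (Fin c → ℂ)) := by
      rintro _ ⟨j, ws, rfl⟩
      refine ⟨((ws.map p.1.1).prod).mulVec (p.1.2 j), ?_⟩
      have hrw : ∀ k, (M k).mulVec (((ws.map B).prod).mulVec (v j))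
          = ((ws.map (fun i => M k * B i * N k)).prod).mulVec ((M k).mulVec (v j)) := by
        intro k
        rw [aux_conj_prod (g k) B ws, Matrix.mulVec_mulVec, Matrix.mulVec_mulVec,
          mul_assoc, mul_assoc, hNM k, mul_one]
      refine Tendsto.congr (fun k => (hrw k).symm) ?_
      exact aux_tmulVec (aux_listProd_tendsto ws _ _ hB') (hv' j)
    have hTtop : T = ⊤ := by
      rw [eq_top_iff, ← hStop]
      exact Submodule.span_le.mpr hgenT
    -- extract the limit matrix
    have hcolT : ∀ l : Fin c, ∃ L, Tendsto (fun k => (M k).mulVec (Pi.single l 1)) atTop (𝓝 L) :=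
      fun l => (hTtop ▸ Submodule.mem_top : Pi.single l 1 ∈ T)
    choose col hcol using hcolT
    set Mlim : Matrix (Fin c) (Fin c) ℂ := Matrix.of fun m l => col l m with hMlimdef
    have hMlim : Tendsto M atTop (𝓝 Mlim) := by
      refine tendsto_pi_nhds.mpr fun m => tendsto_pi_nhds.mpr fun l => ?_
      have := tendsto_pi_nhds.mp (hcol l) m
      refine this.congr fun k => ?_
      simp [Matrix.mulVec_single]
    have hdet : Tendsto (fun k => (M k).det) atTop (𝓝 Mlim.det) :=
      ((continuous_id.matrix_det).tendsto Mlim).comp hMlim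
    -- the scalar relation
    have hconst : ∀ k, (M k).det ^ ℓ * ((N k).det ^ ℓ * z) = z := by
      intro k
      rw [← mul_assoc, ← mul_pow, ← Matrix.det_mul, hMN k, Matrix.det_one, one_pow, one_mul]
    have hzlim : Mlim.det ^ ℓ * p.2 = z := by
      have hA : Tendsto (fun k => (M k).det ^ ℓ * ((N k).det ^ ℓ * z)) atTop
          (𝓝 (Mlim.det ^ ℓ * p.2)) := (hdet.pow ℓ).mul hz'
      have hB2 : Tendsto (fun k => (M k).det ^ ℓ * ((N k).det ^ ℓ * z)) atTop (𝓝 z) :=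
        (tendsto_const_nhds : Tendsto (fun _ : ℕ => z) atTop (𝓝 z)).congr
          fun k => (hconst k).symm
      exact tendsto_nhds_unique hA hB2
    have hd : Mlim.det ≠ 0 := by
      intro h0
      rw [h0, zero_pow hℓ.ne', zero_mul] at hzlim
      exact hz hzlim.symm
    -- convergence of the inverses
    have hNlim : Tendsto N atTop (𝓝 Mlim⁻¹) := by
      have hadj : Tendsto (fun k => (M k).adjugate) atTop (𝓝 Mlim.adjugate) :=
        ((continuous_id.matrix_adjugate).tendsto Mlim).comp hMlim
      have hinv : Tendsto (fun k => ((M k).det)⁻¹) atTop (𝓝 (Mlim.det)⁻¹) := hdet.inv₀ hd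
      have heqN : ∀ k, N k = ((M k).det)⁻¹ • (M k).adjugate := by
        intro k
        show (↑(g k)⁻¹ : Matrix (Fin c) (Fin c) ℂ) = _
        rw [Matrix.coe_units_inv, Matrix.inv_def, Ring.inverse_eq_inv]
      have hMinv : Mlim⁻¹ = (Mlim.det)⁻¹ • Mlim.adjugate := by
        rw [Matrix.inv_def, Ring.inverse_eq_inv]
      rw [hMinv]
      exact (hinv.smul hadj).congr fun k => (heqN k).symm
    -- assemble the limit group element
    have hdu : IsUnit Mlim.det := isUnit_iff_ne_zero.mpr hd
    refine ⟨Mlim.nonsingInvUnit hdu, ?_⟩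
    have hval : ((Mlim.nonsingInvUnit hdu : GL (Fin c) ℂ) : Matrix (Fin c) (Fin c) ℂ) = Mlim := rfl
    have hvalinv : ((↑(Mlim.nonsingInvUnit hdu)⁻¹ : Matrix (Fin c) (Fin c) ℂ)) = Mlim⁻¹ := by
      rw [Matrix.coe_units_inv, hval]
    refine Prod.ext (Prod.ext ?_ ?_) ?_
    · funext i
      exact tendsto_nhds_unique (hB' i)
        (by simpa [hval, hvalinv] using aux_tmul (aux_tmul hMlim tendsto_const_nhds) hNlim)
    · funext j
      exact tendsto_nhds_unique (hv' j)
        (by simpa [hval] using aux_tmulVec hMlim (tendsto_const_nhds (x := v j)))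
    · show p.2 = ((↑(Mlim.nonsingInvUnit hdu)⁻¹ : Matrix (Fin c) (Fin c) ℂ).det) ^ ℓ * z
      rw [hvalinv, Matrix.det_nonsing_inv, Ring.inverse_eq_inv, ← hzlim, ← mul_assoc,
        ← mul_pow, inv_mul_cancel₀ hd, one_pow, one_mul]
  have heq : {q : {p : ((Fin n → Matrix (Fin c) (Fin c) ℂ) × (Fin r → Fin c → ℂ)) × ℂ //
        ∀ i j, Commute (p.1.1 i) (p.1.1 j)} |
      ∃ g : GL (Fin c) ℂ,
        (q : ((Fin n → Matrix (Fin c) (Fin c) ℂ) × (Fin r → Fin c → ℂ)) × ℂ) =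
          (((fun i => (g : Matrix (Fin c) (Fin c) ℂ) * B i * ((↑g⁻¹ : Matrix (Fin c) (Fin c) ℂ))),
            fun j => (g : Matrix (Fin c) (Fin c) ℂ).mulVec (v j)),
           ((↑g⁻¹ : Matrix (Fin c) (Fin c) ℂ).det) ^ ℓ * z)} =
      Subtype.val ⁻¹' {p : ((Fin n → Matrix (Fin c) (Fin c) ℂ) × (Fin r → Fin c → ℂ)) × ℂ |
      ∃ g : GL (Fin c) ℂ, p =
          (((fun i => (g : Matrix (Fin c) (Fin c) ℂ) * B i * ((↑g⁻¹ : Matrix (Fin c) (Fin c) ℂ))),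
            fun j => (g : Matrix (Fin c) (Fin c) ℂ).mulVec (v j)),
           ((↑g⁻¹ : Matrix (Fin c) (Fin c) ℂ).det) ^ ℓ * z)} := rfl
  rw [heq]
  exact key.preimage continuous_subtype_val
end
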